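/- Let a, s, t, A, B, C be rational numbers with s ≠ 0, t ≠ 0, A ≠ 0, B ≠ 0, C ≠ 0, and suppose 36as⁴t⁴A³ + 9s⁸B³ + 4C²A = C²B. Define x = 6ast³A²/(BC), y = (3/2)·s⁵B²/(tAC), and z = (2/3)·C/(s³tB). Then xyz(x + y + z) = a. -/

import Mathlib

theorem stmt_1 (a s t A B C : ℚ) (hs : s ≠ 0) (ht : t ≠ 0)
    (hA : A ≠ 0) (hB : B ≠ 0) (hC : C ≠ 0)
    (h : 36 * a * s ^ 4 * t ^ 4 * A ^ 3 + 9 * s ^ 8 * B ^ 3 + 4 * C ^ 2 * A = C ^ 2 * B)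
    (x y z : ℚ)
    (hx : x = 6 * a * s * t ^ 3 * A ^ 2 / (B * C))
    (hy : y = 3 / 2 * (s ^ 5 * B ^ 2) / (t * A * C))
    (hz : z = 2 / 3 * C / (s ^ 3 * t * B)) :
    x * y * z * (x + y + z) = a := by
  subst hx hy hz
  field_simp
  linear_combination (6 * a) * h
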